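/- Let x, x̃ ∈ ℝ^N with ⟨x,x⟩ = ⟨x̃,x̃⟩ = 1, ⟨x̃,x⟩ ≠ −1, ⟨Ax,x⟩ ≠ 0, A = diag(α_1,…,α_N), and p defined by h p_k = 2(x̃_k+x_k)/(1+⟨x̃,x⟩) − 4α_k x_k/⟨Ax,x⟩ + 2x_k. Then 2/(1+⟨x̃,x⟩) = ‖2Ax/⟨Ax,x⟩ − x + hp/2‖², and consequently x̃ is uniquely determined by (x,p): x̃_k = (1+⟨x̃,x⟩)·(2α_k x_k/⟨Ax,x⟩ − x_k + h p_k/2) − x_k. -/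

import Mathlib

open Finset

theorem adler_explicit_map (N : ℕ) (α : Fin N → ℝ) (h : ℝ) (hh : h ≠ 0)
    (x xt p : Fin N → ℝ)
    (hs1 : ∑ i, x i * x i = 1) (hs2 : ∑ i, xt i * xt i = 1)
    (h1 : (∑ i, xt i * x i) ≠ -1) (h2 : (∑ i, α i * x i * x i) ≠ 0)
    (hp : ∀ k, h * p k = 2 * (xt k + x k) / (1 + ∑ i, xt i * x i)
        - 4 * α k * x k / (∑ i, α i * x i * x i) + 2 * x k) :
    (2 / (1 + ∑ i, xt i * x i)
      = ∑ k, (2 * α k * x k / (∑ i, α i * x i * x i) - x k + h * p k / 2) ^ 2)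
    ∧
    (∀ k, xt k = (1 + ∑ i, xt i * x i)
        * (2 * α k * x k / (∑ i, α i * x i * x i) - x k + h * p k / 2) - x k) := by
  set S := ∑ i, xt i * x i with hS
  set T := ∑ i, α i * x i * x i with hT
  have h1' : 1 + S ≠ 0 := fun hc => h1 (by linarith)
  have key : ∀ k, 2 * α k * x k / T - x k + h * p k / 2 = (xt k + x k) / (1 + S) := by
    intro k
    rw [hp k]
    ring
  have e : ∑ k, (xt k + x k) ^ 2 = 2 * (1 + S) := by
    have hk : ∀ k : Fin N, (xt k + x k) ^ 2
        = xt k * xt k + 2 * (xt k * x k) + x k * x k := fun k => by ring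
    simp_rw [hk]
    rw [Finset.sum_add_distrib, Finset.sum_add_distrib, ← Finset.mul_sum, hs1, hs2, ← hS]
    ring
  constructor
  · simp_rw [key, div_pow, ← Finset.sum_div, e]
    field_simp
  · intro k
    rw [key k]
    field_simp
    ring
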